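/- For every simple graph G on n ≥ 2 vertices, there exists a subset S ⊆ V(G) such that E(G_S) > E(G). -/

import Mathlib

set_option linter.unusedSectionVars false

open Matrix Finset

/-- Diagonal 0/1 indicator matrix of the loop set `S`. -/
def loopDiag {V : Type} [Fintype V] [DecidableEq V] (S : Finset V) : Matrix V V ℝ :=
  Matrix.diagonal (fun v => if v ∈ S then (1 : ℝ) else 0)

lemma adjMatrix_isHermitian {V : Type} [Fintype V] [DecidableEq V]
    (G : SimpleGraph V) [DecidableRel G.Adj] :
    (SimpleGraph.adjMatrix ℝ G).IsHermitian := by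
  rw [Matrix.IsHermitian, conjTranspose_eq_transpose_of_trivial]
  exact G.isSymm_adjMatrix

lemma selfLoop_isHermitian {V : Type} [Fintype V] [DecidableEq V]
    (G : SimpleGraph V) [DecidableRel G.Adj] (S : Finset V) :
    (SimpleGraph.adjMatrix ℝ G + loopDiag S).IsHermitian :=
  (adjMatrix_isHermitian G).add (Matrix.isHermitian_diagonal _)

/-- `∑ i, |λᵢ(M) - c|`, the eigenvalue sum of absolute deviations from `c`. -/
noncomputable def energyOf {V : Type} [Fintype V] [DecidableEq V]
    (M : Matrix V V ℝ) (hM : M.IsHermitian) (c : ℝ) : ℝ :=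
  ∑ i, |hM.eigenvalues i - c|

/-- The energy of a simple graph: sum of absolute values of adjacency eigenvalues. -/
noncomputable def graphEnergy {V : Type} [Fintype V] [DecidableEq V]
    (G : SimpleGraph V) [DecidableRel G.Adj] : ℝ :=
  energyOf _ (adjMatrix_isHermitian G) 0

/-- The energy of the self-loop graph `G_S`: `∑ i, |λᵢ(A(G)+D_S) - |S|/n|`. -/
noncomputable def selfLoopEnergy {V : Type} [Fintype V] [DecidableEq V]
    (G : SimpleGraph V) [DecidableRel G.Adj] (S : Finset V) : ℝ :=
  energyOf _ (selfLoop_isHermitian G S) ((S.card : ℝ) / (Fintype.card V))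

section AuxEnergy
variable {V : Type} [Fintype V] [DecidableEq V]
variable {V : Type} [Fintype V] [DecidableEq V]

lemma spectral_real (M : Matrix V V ℝ) (hM : M.IsHermitian) :
    M = (hM.eigenvectorUnitary : Matrix V V ℝ) * diagonal hM.eigenvalues
      * star (hM.eigenvectorUnitary : Matrix V V ℝ) := by
  conv_lhs => rw [hM.spectral_theorem]
  rw [RCLike.ofReal_real_eq_id, Function.id_comp, Unitary.conjStarAlgAut_apply]

lemma unit_mul_star (U : Matrix.unitaryGroup V ℝ) :
    (U : Matrix V V ℝ) * star (U : Matrix V V ℝ) = 1 :=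
  Matrix.mem_unitaryGroup_iff.mp U.2

lemma unit_star_mul (U : Matrix.unitaryGroup V ℝ) :
    star (U : Matrix V V ℝ) * (U : Matrix V V ℝ) = 1 :=
  Matrix.mem_unitaryGroup_iff'.mp U.2

/-- conjugation preserves multiplication -/
lemma conj_mul' (U : Matrix.unitaryGroup V ℝ) (X Y : Matrix V V ℝ) :
    star (U : Matrix V V ℝ) * (X * Y) * (U : Matrix V V ℝ)
      = (star (U : Matrix V V ℝ) * X * (U : Matrix V V ℝ))
        * (star (U : Matrix V V ℝ) * Y * (U : Matrix V V ℝ)) := by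
  have h := unit_mul_star U
  calc star (U : Matrix V V ℝ) * (X * Y) * (U : Matrix V V ℝ)
      = star (U : Matrix V V ℝ)
          * (X * (((U : Matrix V V ℝ) * star (U : Matrix V V ℝ)) * Y)) * (U : Matrix V V ℝ) := by
        rw [h, Matrix.one_mul]
    _ = (star (U : Matrix V V ℝ) * X * (U : Matrix V V ℝ))
        * (star (U : Matrix V V ℝ) * Y * (U : Matrix V V ℝ)) := by
        simp only [Matrix.mul_assoc]

lemma conj_cancel (U : Matrix.unitaryGroup V ℝ) (Z : Matrix V V ℝ) :
    (U : Matrix V V ℝ) * (star (U : Matrix V V ℝ) * Z * (U : Matrix V V ℝ))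
      * star (U : Matrix V V ℝ) = Z := by
  calc (U : Matrix V V ℝ) * (star (U : Matrix V V ℝ) * Z * (U : Matrix V V ℝ))
      * star (U : Matrix V V ℝ)
      = ((U : Matrix V V ℝ) * star (U : Matrix V V ℝ)) * Z
        * ((U : Matrix V V ℝ) * star (U : Matrix V V ℝ)) := by simp only [Matrix.mul_assoc]
    _ = Z := by rw [unit_mul_star U]; simp

lemma conj_cancel' (U : Matrix.unitaryGroup V ℝ) (Z : Matrix V V ℝ) :
    star (U : Matrix V V ℝ) * ((U : Matrix V V ℝ) * Z * star (U : Matrix V V ℝ))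
      * (U : Matrix V V ℝ) = Z := by
  calc star (U : Matrix V V ℝ) * ((U : Matrix V V ℝ) * Z * star (U : Matrix V V ℝ))
      * (U : Matrix V V ℝ)
      = (star (U : Matrix V V ℝ) * (U : Matrix V V ℝ)) * Z
        * (star (U : Matrix V V ℝ) * (U : Matrix V V ℝ)) := by simp only [Matrix.mul_assoc]
    _ = Z := by rw [unit_star_mul U]; simp

lemma conj_inj (U : Matrix.unitaryGroup V ℝ) (X Y : Matrix V V ℝ)
    (h : star (U : Matrix V V ℝ) * X * (U : Matrix V V ℝ)
       = star (U : Matrix V V ℝ) * Y * (U : Matrix V V ℝ)) : X = Y := by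
  rw [← conj_cancel U X, h, conj_cancel U Y]

lemma trace_conj (U : Matrix.unitaryGroup V ℝ) (X : Matrix V V ℝ) :
    Matrix.trace (star (U : Matrix V V ℝ) * X * (U : Matrix V V ℝ)) = Matrix.trace X := by
  rw [Matrix.trace_mul_cycle, unit_mul_star U, Matrix.one_mul]

lemma smul_one_mat (c : ℝ) :
    (diagonal (fun _ : V => c) : Matrix V V ℝ) = c • 1 :=
  (Matrix.smul_one_eq_diagonal c).symm

/-- Main duality lemma: `tr((N - cI) W) ≤ ∑ |νⱼ - c|` for `W = U diag(s) U*` with `|sᵢ| ≤ 1`,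
and in the equality case `W` commutes with `N`. -/
lemma dual_main (N : Matrix V V ℝ) (hN : N.IsHermitian) (c : ℝ)
    (U : Matrix.unitaryGroup V ℝ) (s : V → ℝ) (hs : ∀ i, |s i| ≤ 1) :
    Matrix.trace ((N - c • 1) * ((U : Matrix V V ℝ) * diagonal s * star (U : Matrix V V ℝ)))
      ≤ ∑ j, |hN.eigenvalues j - c| ∧
    (Matrix.trace ((N - c • 1) * ((U : Matrix V V ℝ) * diagonal s * star (U : Matrix V V ℝ)))
       = ∑ j, |hN.eigenvalues j - c| →
      N * ((U : Matrix V V ℝ) * diagonal s * star (U : Matrix V V ℝ))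
        = ((U : Matrix V V ℝ) * diagonal s * star (U : Matrix V V ℝ)) * N) := by
  set W : Matrix V V ℝ := (U : Matrix V V ℝ) * diagonal s * star (U : Matrix V V ℝ) with hWdef
  set VU := hN.eigenvectorUnitary with hVUdef
  set a : V → ℝ := fun j => hN.eigenvalues j - c with hadef
  set Q : Matrix V V ℝ := star (VU : Matrix V V ℝ) * (U : Matrix V V ℝ) with hQdef
  set P : Matrix V V ℝ := Q * diagonal s * star Q with hPdef
  have hstarQ : star Q = star (U : Matrix V V ℝ) * (VU : Matrix V V ℝ) := by
    rw [hQdef, Matrix.star_mul, star_star]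
  -- N - c•1 = VU diag(a) VU*
  have h1 : N - c • 1 = (VU : Matrix V V ℝ) * diagonal a * star (VU : Matrix V V ℝ) := by
    have hc : (c • 1 : Matrix V V ℝ)
        = (VU : Matrix V V ℝ) * diagonal (fun _ => c) * star (VU : Matrix V V ℝ) := by
      rw [smul_one_mat, Matrix.mul_smul, Matrix.mul_one, Matrix.smul_mul, unit_mul_star VU]
    conv_lhs => rw [spectral_real N hN, hc]
    rw [← Matrix.sub_mul, ← Matrix.mul_sub, ← Matrix.diagonal_sub]
  have hNc : star (VU : Matrix V V ℝ) * (N - c • 1) * (VU : Matrix V V ℝ) = diagonal a := by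
    rw [h1]; exact conj_cancel' VU _
  have hW : star (VU : Matrix V V ℝ) * W * (VU : Matrix V V ℝ) = P := by
    rw [hWdef, hPdef, hQdef, hstarQ]
    simp only [Matrix.mul_assoc]
  have hQQ : Q * star Q = 1 := by
    rw [hQdef, hstarQ, Matrix.mul_assoc, ← Matrix.mul_assoc (U : Matrix V V ℝ),
      unit_mul_star U, Matrix.one_mul, unit_star_mul VU]
  have hrow : ∀ j, ∑ i, Q j i ^ 2 = 1 := by
    intro j
    have := congrFun (congrFun hQQ j) j
    rw [Matrix.mul_apply] at this
    simp only [Matrix.one_apply_eq] at this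
    rw [← this]
    refine Finset.sum_congr rfl fun i _ => ?_
    rw [Matrix.star_apply]; simp [sq]
  have hPapp : ∀ j k, P j k = ∑ i, Q j i * s i * Q k i := by
    intro j k
    rw [hPdef, Matrix.mul_apply]
    refine Finset.sum_congr rfl fun i _ => ?_
    rw [Matrix.mul_diagonal, Matrix.star_apply]
    simp
  -- trace formula
  have htr : Matrix.trace ((N - c • 1) * W) = ∑ j, a j * P j j := by
    rw [← trace_conj VU ((N - c • 1) * W), conj_mul' VU (N - c • 1) W, hNc, hW]
    rw [Matrix.trace]
    refine Finset.sum_congr rfl fun j _ => ?_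
    rw [Matrix.diag_apply, Matrix.diagonal_mul]
  -- pointwise bound
  have hb : ∀ j, a j * P j j ≤ |a j| := by
    intro j
    have hP1 : |P j j| ≤ 1 := by
      rw [hPapp]
      calc |∑ i, Q j i * s i * Q j i| ≤ ∑ i, |Q j i * s i * Q j i| :=
            Finset.abs_sum_le_sum_abs _ _
        _ ≤ ∑ i, Q j i ^ 2 := by
            refine Finset.sum_le_sum fun i _ => ?_
            have : |Q j i * s i * Q j i| = |s i| * Q j i ^ 2 := by
              rw [abs_mul, abs_mul, ← sq_abs (Q j i)]
              ring
            rw [this]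
            calc |s i| * Q j i ^ 2 ≤ 1 * Q j i ^ 2 :=
                  mul_le_mul_of_nonneg_right (hs i) (sq_nonneg _)
              _ = Q j i ^ 2 := one_mul _
        _ = 1 := hrow j
    calc a j * P j j ≤ |a j * P j j| := le_abs_self _
      _ = |a j| * |P j j| := abs_mul _ _
      _ ≤ |a j| * 1 := mul_le_mul_of_nonneg_left hP1 (abs_nonneg _)
      _ = |a j| := mul_one _
  constructor
  · rw [htr]; exact Finset.sum_le_sum fun j _ => hb j
  · intro heq
    rw [htr] at heq
    have hall : ∀ j, a j * P j j = |a j| := by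
      intro j
      have := (Finset.sum_eq_sum_iff_of_le (fun j _ => hb j)).mp heq
      exact this j (Finset.mem_univ j)
    -- key claim : columns with a k ≠ 0
    have claim : ∀ k, a k ≠ 0 → ∀ j, j ≠ k → P j k = 0 := by
      intro k hk j hjk
      rcases hk.lt_or_gt with hneg | hpos
      · -- a k < 0, P k k = -1
        have hPkk : P k k = -1 := by
          have h2 : a k * P k k = a k * (-1) := by
            rw [hall k, abs_of_neg hneg]; ring
          exact mul_left_cancel₀ (ne_of_lt hneg) h2
        have hsum : ∑ i, (1 + s i) * Q k i ^ 2 = 0 := by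
          have e1 : ∀ i, (1 + s i) * Q k i ^ 2 = Q k i ^ 2 + Q k i * s i * Q k i := by
            intro i; ring
          rw [Finset.sum_congr rfl fun i _ => e1 i, Finset.sum_add_distrib, hrow k,
            ← hPapp k k, hPkk]
          ring
        have hterm : ∀ i ∈ Finset.univ, (0:ℝ) ≤ (1 + s i) * Q k i ^ 2 := by
          intro i _
          have : -1 ≤ s i := neg_le_of_abs_le (hs i)
          have h1 : (0:ℝ) ≤ 1 + s i := by linarith
          positivity
        have hzero := (Finset.sum_eq_zero_iff_of_nonneg hterm).mp hsum
        have key : ∀ i, s i * Q k i = -Q k i := by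
          intro i
          rcases mul_eq_zero.mp (hzero i (Finset.mem_univ i)) with h | h
          · have : s i = -1 := by linarith
            rw [this]; ring
          · have : Q k i = 0 := by
              exact pow_eq_zero_iff (by norm_num) |>.mp h
            rw [this]; ring
        rw [hPapp]
        have : ∀ i, Q j i * s i * Q k i = -(Q j i * Q k i) := by
          intro i
          rw [mul_assoc, key i]; ring
        rw [Finset.sum_congr rfl fun i _ => this i, Finset.sum_neg_distrib]
        have : ∑ i, Q j i * Q k i = (0:ℝ) := by
          have := congrFun (congrFun hQQ j) k
          rw [Matrix.mul_apply] at this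
          simp only [Matrix.one_apply_ne hjk] at this
          rw [← this]
          refine Finset.sum_congr rfl fun i _ => ?_
          rw [Matrix.star_apply]; simp
        rw [this]; ring
      · -- a k > 0, P k k = 1
        have hPkk : P k k = 1 := by
          have h2 : a k * P k k = a k * 1 := by
            rw [hall k, abs_of_pos hpos]; ring
          exact mul_left_cancel₀ (ne_of_gt hpos) h2
        have hsum : ∑ i, (1 - s i) * Q k i ^ 2 = 0 := by
          have e1 : ∀ i, (1 - s i) * Q k i ^ 2 = Q k i ^ 2 - Q k i * s i * Q k i := by
            intro i; ring
          rw [Finset.sum_congr rfl fun i _ => e1 i, Finset.sum_sub_distrib, hrow k,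
            ← hPapp k k, hPkk]
          ring
        have hterm : ∀ i ∈ Finset.univ, (0:ℝ) ≤ (1 - s i) * Q k i ^ 2 := by
          intro i _
          have : s i ≤ 1 := le_of_abs_le (hs i)
          have h1 : (0:ℝ) ≤ 1 - s i := by linarith
          positivity
        have hzero := (Finset.sum_eq_zero_iff_of_nonneg hterm).mp hsum
        have key : ∀ i, s i * Q k i = Q k i := by
          intro i
          rcases mul_eq_zero.mp (hzero i (Finset.mem_univ i)) with h | h
          · have : s i = 1 := by linarith
            rw [this]; ring
          · have : Q k i = 0 := by
              exact pow_eq_zero_iff (by norm_num) |>.mp h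
            rw [this]; ring
        rw [hPapp]
        have : ∀ i, Q j i * s i * Q k i = Q j i * Q k i := by
          intro i
          rw [mul_assoc, key i]
        rw [Finset.sum_congr rfl fun i _ => this i]
        have := congrFun (congrFun hQQ j) k
        rw [Matrix.mul_apply] at this
        simp only [Matrix.one_apply_ne hjk] at this
        rw [← this]
        refine Finset.sum_congr rfl fun i _ => ?_
        rw [Matrix.star_apply]; simp
    have hPsymm : ∀ j k, P j k = P k j := by
      intro j k
      rw [hPapp, hPapp]
      exact Finset.sum_congr rfl fun i _ => by ring
    have hDP : diagonal a * P = P * diagonal a := by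
      ext j k
      rw [Matrix.diagonal_mul, Matrix.mul_diagonal]
      by_cases hjk : j = k
      · subst hjk; ring
      · by_cases hak : a k = 0
        · by_cases haj : a j = 0
          · rw [hak, haj]; ring
          · have : P j k = 0 := by
              rw [hPsymm]
              exact claim j haj k (Ne.symm hjk)
            rw [this, hak]; ring
        · rw [claim k hak j hjk]; ring
    have h2 : (N - c • 1) * W = W * (N - c • 1) := by
      apply conj_inj VU
      rw [conj_mul' VU (N - c • 1) W, conj_mul' VU W (N - c • 1), hNc, hW, hDP]
    have h3 : (c • 1 : Matrix V V ℝ) * W = W * (c • 1 : Matrix V V ℝ) := by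
      rw [Matrix.smul_mul, Matrix.one_mul, Matrix.mul_smul, Matrix.mul_one]
    rw [Matrix.sub_mul, Matrix.mul_sub, h3] at h2
    exact sub_left_inj.mp h2

end AuxEnergy

/-- Akbari et al.'s conjecture: every simple graph on at least two vertices has
a loop set `S` with `E(G_S) > E(G)`. -/
theorem exists_selfLoopEnergy_gt {V : Type} [Fintype V] [DecidableEq V]
    (G : SimpleGraph V) [DecidableRel G.Adj] (hn : 2 ≤ Fintype.card V) :
    ∃ S : Finset V, graphEnergy G < selfLoopEnergy G S := by

  by_contra hcon
  push_neg at hcon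
  -- setup
  set A : Matrix V V ℝ := SimpleGraph.adjMatrix ℝ G with hAdef
  have hA : A.IsHermitian := adjMatrix_isHermitian G
  set U := hA.eigenvectorUnitary with hUdef
  set lam : V → ℝ := hA.eigenvalues with hlamdef
  set s : V → ℝ := fun i => Real.sign (lam i) with hsdef
  have hs : ∀ i, |s i| ≤ 1 := by
    intro i
    rcases lt_trichotomy (lam i) 0 with h | h | h
    · rw [hsdef]; simp [Real.sign_of_neg h]
    · rw [hsdef]; simp [h, Real.sign_zero]
    · rw [hsdef]; simp [Real.sign_of_pos h]
  set W : Matrix V V ℝ := (U : Matrix V V ℝ) * diagonal s * star (U : Matrix V V ℝ) with hWdef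
  have hUW : star (U : Matrix V V ℝ) * W * (U : Matrix V V ℝ) = diagonal s := by
    rw [hWdef]; exact conj_cancel' U _
  have hUA : star (U : Matrix V V ℝ) * A * (U : Matrix V V ℝ) = diagonal lam := by
    conv_lhs => rw [spectral_real A hA]
    exact conj_cancel' U _
  have hAW : A * W = W * A := by
    apply conj_inj U
    rw [conj_mul' U A W, conj_mul' U W A, hUA, hUW, Matrix.diagonal_mul_diagonal,
      Matrix.diagonal_mul_diagonal]
    exact congrArg diagonal (funext fun i => mul_comm (lam i) (s i))
  have hsign : ∀ x : ℝ, x * Real.sign x = |x| := by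
    intro x
    rcases lt_trichotomy x 0 with h | h | h
    · rw [Real.sign_of_neg h, abs_of_neg h]; ring
    · simp [h]
    · rw [Real.sign_of_pos h, abs_of_pos h]; ring
  have hEg : graphEnergy G = ∑ i, |lam i| := by
    rw [graphEnergy, energyOf]
    exact Finset.sum_congr rfl fun i _ => by rw [sub_zero]
  have htrAW : Matrix.trace (A * W) = graphEnergy G := by
    rw [← trace_conj U (A * W), conj_mul' U A W, hUA, hUW, Matrix.diagonal_mul_diagonal,
      Matrix.trace_diagonal, hEg]
    exact Finset.sum_congr rfl fun i _ => hsign (lam i)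
  set n : ℝ := (Fintype.card V : ℝ) with hndef
  have hn2 : (2 : ℝ) ≤ n := by rw [hndef]; exact_mod_cast hn
  have hnpos : (0 : ℝ) < n := by linarith
  set tW : ℝ := Matrix.trace W with htWdef
  have htW : tW = ∑ v, W v v := by rw [htWdef, Matrix.trace]; rfl
  -- per-vertex quantities
  have hcard : ∀ v : V, ((({v} : Finset V).card : ℝ) / (Fintype.card V : ℝ)) = 1 / n := by
    intro v; rw [Finset.card_singleton, hndef]; norm_num
  have hEv : ∀ v : V, selfLoopEnergy G {v}
      = ∑ j, |(selfLoop_isHermitian G {v}).eigenvalues j - 1 / n| := by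
    intro v
    rw [selfLoopEnergy, energyOf, hcard v]
  have htrD : ∀ v : V, Matrix.trace (loopDiag {v} * W) = W v v := by
    intro v
    rw [Matrix.trace]
    have : ∀ u : V, (loopDiag ({v} : Finset V) * W).diag u
        = (if u = v then W u u else 0) := by
      intro u
      rw [Matrix.diag_apply, loopDiag, Matrix.diagonal_mul]
      by_cases h : u = v <;> simp [h]
    rw [Finset.sum_congr rfl fun u _ => this u]
    simp
  have htrv : ∀ v : V,
      Matrix.trace ((A + loopDiag {v} - (1 / n) • 1) * W)
        = graphEnergy G + (W v v - tW / n) := by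
    intro v
    rw [Matrix.sub_mul, Matrix.trace_sub, Matrix.add_mul, Matrix.trace_add,
      Matrix.smul_mul, Matrix.one_mul, Matrix.trace_smul, htrAW, htrD v]
    rw [smul_eq_mul, ← htWdef]
    ring
  -- the duality inequality for each singleton
  have hduals := fun v : V =>
    dual_main (A + loopDiag {v}) (selfLoop_isHermitian G {v}) (1 / n) U s hs
  -- Step 1: all diagonal entries of W are ≤ tW/n, hence equal to it
  have hle : ∀ v : V, W v v ≤ tW / n := by
    intro v
    have h1 := (hduals v).1
    rw [htrv v, ← hEv v] at h1
    have h2 := hcon {v}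
    linarith
  have heqdiag : ∀ v : V, W v v = tW / n := by
    have hsum : ∑ v, W v v = ∑ _v : V, tW / n := by
      rw [← htW, Finset.sum_const, Finset.card_univ, nsmul_eq_mul, ← hndef]
      field_simp
    intro v
    exact (Finset.sum_eq_sum_iff_of_le fun v _ => hle v).mp hsum v (Finset.mem_univ v)
  -- Step 2: equality in duality for each vertex, hence commutation
  have hcomm : ∀ v : V, loopDiag ({v} : Finset V) * W = W * loopDiag ({v} : Finset V) := by
    intro v
    have heq : Matrix.trace ((A + loopDiag {v} - (1 / n) • 1) * W)
        = ∑ j, |(selfLoop_isHermitian G {v}).eigenvalues j - 1 / n| := by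
      have h1 := (hduals v).1
      rw [← hEv v] at h1 ⊢
      have h2 := hcon {v}
      have h3 := htrv v
      rw [heqdiag v] at h3
      have h4 : Matrix.trace ((A + loopDiag {v} - (1 / n) • 1) * W) = graphEnergy G := by
        rw [h3]; ring
      linarith
    have hNW := (hduals v).2 heq
    rw [Matrix.add_mul, Matrix.mul_add, hAW] at hNW
    exact add_left_cancel hNW
  -- Step 3: W is diagonal
  have hWoff : ∀ v u : V, v ≠ u → W v u = 0 := by
    intro v u hvu
    have := congrFun (congrFun (hcomm v) v) u
    rw [loopDiag, Matrix.diagonal_mul, Matrix.mul_diagonal] at this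
    simpa [Finset.mem_singleton, (Ne.symm hvu)] using this
  -- Step 4: graphEnergy G = 0
  have hEg0 : graphEnergy G = 0 := by
    rw [← htrAW, Matrix.trace]
    refine Finset.sum_eq_zero fun j _ => ?_
    rw [Matrix.diag_apply, Matrix.mul_apply]
    refine Finset.sum_eq_zero fun i _ => ?_
    by_cases h : i = j
    · subst h
      rw [hAdef]
      simp
    · rw [hWoff i j h]; ring
  -- Step 5: contradiction
  obtain ⟨u, v, huv⟩ := Fintype.exists_pair_of_one_lt_card (α := V) (by omega)
  have hEv0 : selfLoopEnergy G {v} = 0 := by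
    have h1 := hcon {v}
    rw [hEg0] at h1
    have h2 : 0 ≤ selfLoopEnergy G {v} := by
      rw [hEv v]
      exact Finset.sum_nonneg fun j _ => abs_nonneg _
    linarith
  have hallc : ∀ j, (selfLoop_isHermitian G {v}).eigenvalues j = 1 / n := by
    intro j
    have h1 : ∑ j, |(selfLoop_isHermitian G {v}).eigenvalues j - 1 / n| = 0 := by
      rw [← hEv v, hEv0]
    have h2 := (Finset.sum_eq_zero_iff_of_nonneg fun j _ => abs_nonneg _).mp h1 j
      (Finset.mem_univ j)
    have := abs_eq_zero.mp h2
    linarith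
  have hNc : A + loopDiag {v} = (1 / n) • (1 : Matrix V V ℝ) := by
    have h1 := spectral_real (A + loopDiag {v}) (selfLoop_isHermitian G {v})
    have h2 : diagonal (selfLoop_isHermitian G {v}).eigenvalues
        = diagonal (fun _ : V => 1 / n) :=
      congrArg diagonal (funext fun j => hallc j)
    rw [h2, smul_one_mat] at h1
    rw [h1, Matrix.mul_smul, Matrix.mul_one, Matrix.smul_mul, unit_mul_star]
  have hentry := congrFun (congrFun hNc u) u
  have hlhs : (A + loopDiag ({v} : Finset V)) u u = 0 := by
    rw [Matrix.add_apply, hAdef, loopDiag, Matrix.diagonal_apply_eq]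
    simp [huv]
  have hrhs : ((1 / n) • (1 : Matrix V V ℝ)) u u = 1 / n := by
    rw [Matrix.smul_apply, Matrix.one_apply_eq, smul_eq_mul, mul_one]
  rw [hlhs, hrhs] at hentry
  have : (0:ℝ) < 1 / n := by positivity
  linarith [hentry.symm ▸ this]
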